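/- (Relation between the left and right Burgunder splittings.) Let K be a commutative ring which is a ℚ-algebra and Λ a finite type. Let τ : FreeAlgebra K Λ ⊗_K FreeAlgebra K Λ → FreeAlgebra K Λ ⊗_K FreeAlgebra K Λ be the K-linear map determined by τ(a ⊗ b) = −(b ⊗ a). Then for every Lie polynomial P ∈ FreeAlgebra K Λ: ∑_{λ∈Λ} 𝔇^R(∂^R_λ(P)) ⊗ X_λ = τ( ∑_{λ∈Λ} X_λ ⊗ 𝔇^L(∂^L_λ(P)) ). -/

import Mathlib

open scoped TensorProduct

attribute [local instance 100] LieRing.ofAssociativeRing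

/-- Left-iterated Lie bracket `[Z₁, …, Z_p]_L` (equal to `Z₁` for a singleton list, `0` for
the empty list). -/
def bracketL {L : Type*} [LieRing L] : List L → L
  | [] => 0
  | [z] => z
  | z :: w :: ws => ⁅z, bracketL (w :: ws)⁆

/-- Right-iterated Lie bracket `[Z₁, …, Z_p]_R` (equal to `Z₁` for a singleton list, `0` for
the empty list). -/
def bracketR {L : Type*} [LieRing L] : List L → L
  | [] => 0
  | z :: zs => zs.foldl (fun acc u => ⁅acc, u⁆) z

/-- The word `X_{λ₁} ⋯ X_{λ_p}` given by a list of letters. -/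
def word (K : Type*) [CommRing K] {Λ : Type*} (ℓ : List Λ) : FreeAlgebra K Λ :=
  (ℓ.map (FreeAlgebra.ι K)).prod

/-- `𝔇^L`, the `K`-linear map with `𝔇^L(X_{λ₁} ⋯ X_{λ_p}) = [X_{λ₁}, …, X_{λ_p}]_L` and
`𝔇^L(1) = 0`. -/
noncomputable def DynL (K : Type*) [CommRing K] (Λ : Type*) :
    FreeAlgebra K Λ →ₗ[K] FreeAlgebra K Λ :=
  (FreeAlgebra.basisFreeMonoid K Λ).constr K fun w =>
    bracketL (w.toList.map (FreeAlgebra.ι K))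

/-- `𝔇^R`, the `K`-linear map with `𝔇^R(X_{λ₁} ⋯ X_{λ_p}) = [X_{λ₁}, …, X_{λ_p}]_R` and
`𝔇^R(1) = 0`. -/
noncomputable def DynR (K : Type*) [CommRing K] (Λ : Type*) :
    FreeAlgebra K Λ →ₗ[K] FreeAlgebra K Λ :=
  (FreeAlgebra.basisFreeMonoid K Λ).constr K fun w =>
    bracketR (w.toList.map (FreeAlgebra.ι K))

/-- `∂^L_μ`, the `K`-linear map sending a word starting with `μ` to the word with the first
letter removed, and all other words (and `1`) to `0`. -/
noncomputable def partialL (K : Type*) [CommRing K] {Λ : Type*} [DecidableEq Λ] (μ : Λ) :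
    FreeAlgebra K Λ →ₗ[K] FreeAlgebra K Λ :=
  (FreeAlgebra.basisFreeMonoid K Λ).constr K fun w =>
    if w.toList.head? = some μ then word K w.toList.tail else 0

/-- `∂^R_μ`, the `K`-linear map sending a word ending with `μ` to the word with the last
letter removed, and all other words (and `1`) to `0`. -/
noncomputable def partialR (K : Type*) [CommRing K] {Λ : Type*} [DecidableEq Λ] (μ : Λ) :
    FreeAlgebra K Λ →ₗ[K] FreeAlgebra K Λ :=
  (FreeAlgebra.basisFreeMonoid K Λ).constr K fun w =>
    if w.toList.getLast? = some μ then word K w.toList.dropLast else 0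

/-- The `K`-linear map `τ` on `A ⊗[K] A` determined by `τ(a ⊗ b) = −(b ⊗ a)`. -/
noncomputable def negSwap (K : Type*) [CommRing K] (Λ : Type*) :
    FreeAlgebra K Λ ⊗[K] FreeAlgebra K Λ →ₗ[K] FreeAlgebra K Λ ⊗[K] FreeAlgebra K Λ :=
  -(TensorProduct.comm K (FreeAlgebra K Λ) (FreeAlgebra K Λ)).toLinearMap

section Aux

variable (K : Type*) [CommRing K] {Λ : Type*}

lemma basis_eq_word (w : FreeMonoid Λ) :
    FreeAlgebra.basisFreeMonoid K Λ w = word K w.toList := by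
  simp only [FreeAlgebra.basisFreeMonoid, Module.Basis.map_apply, Finsupp.coe_basisSingleOne,
    AlgEquiv.toLinearEquiv_apply]
  show FreeAlgebra.equivMonoidAlgebraFreeMonoid.symm (MonoidAlgebra.single w 1) = _
  rw [FreeAlgebra.equivMonoidAlgebraFreeMonoid, AlgEquiv.ofAlgHom_symm_apply]
  simp [MonoidAlgebra.lift_single, FreeMonoid.lift_apply, word]

lemma word_eq_basis (l : List Λ) :
    word K l = FreeAlgebra.basisFreeMonoid K Λ (FreeMonoid.ofList l) := by
  rw [basis_eq_word, FreeMonoid.toList_ofList]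

variable (Λ) in
lemma DynL_word (l : List Λ) :
    DynL K Λ (word K l) = bracketL (l.map (FreeAlgebra.ι K)) := by
  rw [word_eq_basis, DynL, Module.Basis.constr_basis, FreeMonoid.toList_ofList]

variable (Λ) in
lemma DynR_word (l : List Λ) :
    DynR K Λ (word K l) = bracketR (l.map (FreeAlgebra.ι K)) := by
  rw [word_eq_basis, DynR, Module.Basis.constr_basis, FreeMonoid.toList_ofList]

lemma partialL_word [DecidableEq Λ] (μ : Λ) (l : List Λ) :
    partialL K μ (word K l) = if l.head? = some μ then word K l.tail else 0 := by
  rw [word_eq_basis, partialL, Module.Basis.constr_basis, FreeMonoid.toList_ofList]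

lemma partialR_word [DecidableEq Λ] (μ : Λ) (l : List Λ) :
    partialR K μ (word K l) = if l.getLast? = some μ then word K l.dropLast else 0 := by
  rw [word_eq_basis, partialR, Module.Basis.constr_basis, FreeMonoid.toList_ofList]

variable (Λ) in
/-- The antipode as an algebra map into the opposite algebra. -/
noncomputable def SaAux : FreeAlgebra K Λ →ₐ[K] (FreeAlgebra K Λ)ᵐᵒᵖ :=
  FreeAlgebra.lift K fun i => MulOpposite.op (-(FreeAlgebra.ι K i))

variable (Λ) in
/-- The antipode of the free algebra, as a `K`-linear map. -/
noncomputable def SAux : FreeAlgebra K Λ →ₗ[K] FreeAlgebra K Λ :=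
  (MulOpposite.opLinearEquiv K).symm.toLinearMap ∘ₗ (SaAux K Λ).toLinearMap

lemma SAux_ι (i : Λ) : SAux K Λ (FreeAlgebra.ι K i) = -(FreeAlgebra.ι K i) := by
  simp [SAux, SaAux]

lemma SAux_one : SAux K Λ 1 = 1 := by simp [SAux]

lemma SAux_mul (a b : FreeAlgebra K Λ) :
    SAux K Λ (a * b) = SAux K Λ b * SAux K Λ a := by
  simp [SAux, map_mul]

lemma word_append (l₁ l₂ : List Λ) :
    word K (l₁ ++ l₂) = word K l₁ * word K l₂ := by
  simp [word]

lemma SAux_word (l : List Λ) :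
    SAux K Λ (word K l) = ((-1 : ℤ) ^ l.length) • word K l.reverse := by
  induction l with
  | nil => simpa [word] using SAux_one K
  | cons a l ih =>
      have h1 : word K (a :: l) = FreeAlgebra.ι K a * word K l := by simp [word]
      rw [h1, SAux_mul, ih, SAux_ι]
      rw [show (a :: l).reverse = l.reverse ++ [a] by simp, word_append]
      have h2 : word K [a] = FreeAlgebra.ι K a := by simp [word]
      rw [h2]
      rw [smul_mul_assoc, mul_neg, smul_neg, List.length_cons, pow_succ, mul_neg_one,
        neg_smul]

lemma bracketR_concat {L : Type*} [LieRing L] (l : List L) (hl : l ≠ []) (a : L) :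
    bracketR (l ++ [a]) = ⁅bracketR l, a⁆ := by
  cases l with
  | nil => exact absurd rfl hl
  | cons z zs => simp [bracketR, List.foldl_append]

lemma bracketL_cons {L : Type*} [LieRing L] (a : L) (l : List L) (hl : l ≠ []) :
    bracketL (a :: l) = ⁅a, bracketL l⁆ := by
  cases l with
  | nil => exact absurd rfl hl
  | cons z zs => rfl

lemma bracketR_rev {L : Type*} [LieRing L] (l : List L) :
    bracketR l = ((-1 : ℤ) ^ (l.length + 1)) • bracketL l.reverse := by
  induction l using List.reverseRecOn with
  | nil => simp [bracketR, bracketL]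
  | append_singleton l a ih =>
      rcases eq_or_ne l [] with rfl | hl
      · simp [bracketR, bracketL]
      · have hrev : l.reverse ≠ [] := by simpa using hl
        rw [bracketR_concat l hl a, ih,
          show (l ++ [a]).reverse = a :: l.reverse by simp,
          bracketL_cons a l.reverse hrev, smul_lie,
          List.length_append, List.length_singleton, pow_succ, mul_neg_one, neg_smul,
          ← smul_neg, lie_skew]
        norm_num [pow_succ]

variable (Λ) in
lemma DynR_eq : DynR K Λ = -(DynL K Λ ∘ₗ SAux K Λ) := by
  apply Module.Basis.ext (FreeAlgebra.basisFreeMonoid K Λ)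
  intro w
  rw [basis_eq_word]
  set l := FreeMonoid.toList w
  rw [DynR_word, LinearMap.neg_apply, LinearMap.comp_apply, SAux_word, map_zsmul,
    DynL_word, bracketR_rev, List.length_map, List.map_reverse, pow_succ, mul_neg_one,
    neg_smul]

variable (Λ) in
lemma partialL_SAux [DecidableEq Λ] (μ : Λ) :
    partialL K μ ∘ₗ SAux K Λ = -(SAux K Λ ∘ₗ partialR K μ) := by
  apply Module.Basis.ext (FreeAlgebra.basisFreeMonoid K Λ)
  intro w
  rw [basis_eq_word]
  set l := FreeMonoid.toList w
  rw [LinearMap.comp_apply, LinearMap.neg_apply, LinearMap.comp_apply, SAux_word,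
    map_zsmul, partialL_word, partialR_word, List.head?_reverse]
  rcases eq_or_ne l.getLast? (some μ) with h | h
  · rw [if_pos h, if_pos h]
    have hl : l ≠ [] := by intro hnil; rw [hnil] at h; simp at h
    have hpos : 0 < l.length := List.length_pos_iff.mpr hl
    rw [List.tail_reverse, SAux_word]
    have hlen : l.length = l.dropLast.length + 1 := by
      rw [List.length_dropLast]; omega
    rw [hlen, pow_succ, mul_neg_one, neg_smul]
  · rw [if_neg h, if_neg h, smul_zero, map_zero, neg_zero]

variable (Λ) in
/-- The set of elements negated by the antipode, as a Lie subalgebra. -/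
noncomputable def negFixed : LieSubalgebra K (FreeAlgebra K Λ) where
  carrier := {x | SAux K Λ x = -x}
  add_mem' := by
    intro x y hx hy
    simp only [Set.mem_setOf_eq, map_add] at *
    rw [hx, hy, neg_add]
  zero_mem' := by simp
  smul_mem' := by
    intro c x hx
    simp only [Set.mem_setOf_eq, map_smul] at *
    rw [hx, smul_neg]
  lie_mem' := by
    intro x y hx hy
    simp only [Set.mem_setOf_eq] at *
    simp only [Ring.lie_def, map_sub, SAux_mul, hx, hy]
    rw [neg_mul_neg, neg_mul_neg, neg_sub]

lemma SAux_lie {P : FreeAlgebra K Λ}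
    (hP : P ∈ LieSubalgebra.lieSpan K (FreeAlgebra K Λ) (Set.range (FreeAlgebra.ι K))) :
    SAux K Λ P = -P := by
  have hle : LieSubalgebra.lieSpan K (FreeAlgebra K Λ) (Set.range (FreeAlgebra.ι K))
      ≤ negFixed K Λ := by
    rw [LieSubalgebra.lieSpan_le]
    rintro x ⟨i, rfl⟩
    exact SAux_ι K i
  exact hle hP

end Aux

/-- (Relation between the left and right Burgunder splittings.)  For every Lie polynomial
`P`, `∑_λ 𝔇^R(∂^R_λ P) ⊗ X_λ = τ(∑_λ X_λ ⊗ 𝔇^L(∂^L_λ P))`. -/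
theorem burgunder_left_right_relation (K : Type*) [CommRing K] [Algebra ℚ K]
    (Λ : Type*) [Fintype Λ] [DecidableEq Λ]
    (P : FreeAlgebra K Λ)
    (hPlie : P ∈ LieSubalgebra.lieSpan K (FreeAlgebra K Λ) (Set.range (FreeAlgebra.ι K))) :
    (∑ lam : Λ, DynR K Λ (partialR K lam P) ⊗ₜ[K] FreeAlgebra.ι K lam) =
      negSwap K Λ (∑ lam : Λ, FreeAlgebra.ι K lam ⊗ₜ[K] DynL K Λ (partialL K lam P)) := by
  have key : ∀ lam : Λ, DynR K Λ (partialR K lam P) = -(DynL K Λ (partialL K lam P)) := by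
    intro lam
    have h0 := LinearMap.congr_fun (partialL_SAux K Λ lam) P
    simp only [LinearMap.comp_apply, LinearMap.neg_apply, SAux_lie K hPlie, map_neg,
      neg_inj] at h0
    have h3 := LinearMap.congr_fun (DynR_eq K Λ) (partialR K lam P)
    rw [LinearMap.neg_apply, LinearMap.comp_apply, ← h0] at h3
    exact h3
  rw [negSwap]
  simp only [LinearMap.neg_apply, LinearEquiv.coe_coe, map_sum, TensorProduct.comm_tmul]
  exact Finset.sum_congr rfl fun x _ => by rw [key x, TensorProduct.neg_tmul]
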